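/- Let s > 1 and set N := s/(s−1). Let m ≥ 1, q₀ > 0 and M > 0. Define recursively q_{k+1} = s(q_k + m − 1) for k ≥ 0. Let (a_k)_{k ≥ 0} be a sequence of nonnegative real numbers with a₀ > 0 satisfying a_{k+1} ≤ M^{s/q_{k+1}} · a_k^{s q_k / q_{k+1}} for every k ≥ 0. Then limsup_{k→∞} a_k ≤ M^{N/A} · a₀^{q₀/A}, where A := q₀ + N(m−1). -/

import Mathlib

open Filter

/-- The real-sequence iteration lemma underlying the Moser-type smoothing
estimate: with `N = s/(s−1)`, `A = q₀ + N(m−1)` and the recursion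
`q_{k+1} = s(q_k + m − 1)`, any nonnegative sequence satisfying
`a_{k+1} ≤ M^{s/q_{k+1}} a_k^{s q_k/q_{k+1}}` has
`limsup a_k ≤ M^{N/A} a₀^{q₀/A}`. -/
theorem moser_iteration_limsup
    (s m q₀ M : ℝ) (hs : 1 < s) (hm : 1 ≤ m) (hq₀ : 0 < q₀) (hM : 0 < M)
    (q : ℕ → ℝ) (hq_zero : q 0 = q₀)
    (hq_rec : ∀ k : ℕ, q (k + 1) = s * (q k + m - 1))
    (a : ℕ → ℝ) (ha_nonneg : ∀ k : ℕ, 0 ≤ a k) (ha_zero : 0 < a 0)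
    (ha_rec : ∀ k : ℕ, a (k + 1) ≤ M ^ (s / q (k + 1)) * a k ^ (s * q k / q (k + 1))) :
    Filter.limsup a Filter.atTop
      ≤ M ^ ((s / (s - 1)) / (q₀ + (s / (s - 1)) * (m - 1))) *
        a 0 ^ (q₀ / (q₀ + (s / (s - 1)) * (m - 1))) := by
  have hs0 : 0 < s := lt_trans one_pos hs
  have hs1 : 0 < s - 1 := by linarith
  set N : ℝ := s / (s - 1) with hN
  set c : ℝ := N * (m - 1) with hc
  set A : ℝ := q₀ + N * (m - 1) with hA
  have hNpos : 0 < N := div_pos hs0 hs1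
  have hcnn : 0 ≤ c := mul_nonneg hNpos.le (by linarith)
  have hApos : 0 < A := by positivity
  -- positivity of q
  have hqpos : ∀ k, 0 < q k := by
    intro k
    induction k with
    | zero => rw [hq_zero]; exact hq₀
    | succ k ih =>
      rw [hq_rec k]
      have : 0 < q k + m - 1 := by linarith
      positivity
  -- explicit formula for q
  have hqform : ∀ k, q k = s ^ k * A - c := by
    intro k
    induction k with
    | zero =>
      simp [hq_zero, hA, hc]
    | succ k ih =>
      rw [hq_rec k, ih, pow_succ, hc, hN]
      field_simp
      ring
  have hspow : ∀ k : ℕ, (0:ℝ) < s ^ k := fun k => pow_pos hs0 k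
  set e : ℕ → ℝ := fun k => s * (s ^ k - 1) / ((s - 1) * q k) with he
  set f : ℕ → ℝ := fun k => q₀ * s ^ k / q k with hf
  -- the key bound
  have hbound : ∀ k, a k ≤ M ^ e k * a 0 ^ f k := by
    intro k
    induction k with
    | zero =>
      have h0 : e 0 = 0 := by simp [he]
      have h1 : f 0 = 1 := by
        simp [hf, hq_zero]
        simp [hq₀.ne']
      rw [h0, h1, Real.rpow_zero, Real.rpow_one, one_mul]
    | succ k ih =>
      have hqk := hqpos k
      have hqk1 := hqpos (k + 1)
      have hEnn : 0 ≤ s * q k / q (k + 1) := by positivity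
      calc a (k + 1) ≤ M ^ (s / q (k + 1)) * a k ^ (s * q k / q (k + 1)) := ha_rec k
        _ ≤ M ^ (s / q (k + 1)) * (M ^ e k * a 0 ^ f k) ^ (s * q k / q (k + 1)) := by
            exact mul_le_mul_of_nonneg_left
              (Real.rpow_le_rpow (ha_nonneg k) ih hEnn) (Real.rpow_nonneg hM.le _)
        _ = M ^ (s / q (k + 1) + e k * (s * q k / q (k + 1))) *
              a 0 ^ (f k * (s * q k / q (k + 1))) := by
            rw [Real.mul_rpow (Real.rpow_nonneg hM.le _) (Real.rpow_nonneg ha_zero.le _),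
              ← Real.rpow_mul hM.le, ← Real.rpow_mul ha_zero.le, ← mul_assoc,
              ← Real.rpow_add hM]
        _ = M ^ e (k + 1) * a 0 ^ f (k + 1) := by
            have h1 : s / q (k + 1) + e k * (s * q k / q (k + 1)) = e (k + 1) := by
              simp only [he]
              rw [hq_rec k] at hqk1 ⊢
              field_simp
              ring
            have h2 : f k * (s * q k / q (k + 1)) = f (k + 1) := by
              simp only [hf]
              field_simp
              ring
            rw [h1, h2]
  -- limits of the exponents
  have ht : Tendsto (fun k : ℕ => s ^ k) atTop atTop :=
    tendsto_pow_atTop_atTop_of_one_lt hs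
  have hinv : Tendsto (fun k : ℕ => (s ^ k)⁻¹) atTop (nhds 0) :=
    ht.inv_tendsto_atTop
  have hdenlim : Tendsto (fun k : ℕ => A - c * (s ^ k)⁻¹) atTop (nhds A) := by
    have := (hinv.const_mul c).const_sub A
    simpa using this
  have hdenne : ∀ k, A - c * (s ^ k)⁻¹ ≠ 0 := by
    intro k
    have : A - c * (s ^ k)⁻¹ = q k / s ^ k := by
      rw [hqform k]; field_simp
    rw [this]
    exact div_ne_zero (hqpos k).ne' (hspow k).ne'
  have helim : Tendsto e atTop (nhds (N / A)) := by
    have h1 : Tendsto (fun k : ℕ => s * (1 - (s ^ k)⁻¹) / ((s - 1) * (A - c * (s ^ k)⁻¹)))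
        atTop (nhds (s * (1 - 0) / ((s - 1) * A))) := by
      apply Tendsto.div
      · exact (hinv.const_sub 1).const_mul s
      · exact hdenlim.const_mul (s - 1)
      · simp; constructor <;> [linarith; exact hApos.ne']
    have heq : ∀ k, e k = s * (1 - (s ^ k)⁻¹) / ((s - 1) * (A - c * (s ^ k)⁻¹)) := by
      intro k
      simp only [he]
      rw [hqform k]
      have h := (hspow k).ne'
      have h2 := hdenne k
      field_simp
    have hval : s * (1 - 0) / ((s - 1) * A) = N / A := by
      rw [hN]; field_simp; norm_num
    rw [← hval]
    exact h1.congr (fun k => (heq k).symm)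
  have hflim : Tendsto f atTop (nhds (q₀ / A)) := by
    have h1 : Tendsto (fun k : ℕ => q₀ / (A - c * (s ^ k)⁻¹)) atTop (nhds (q₀ / A)) :=
      Tendsto.div tendsto_const_nhds hdenlim hApos.ne'
    apply h1.congr
    intro k
    simp only [hf]
    rw [hqform k]
    have h := (hspow k).ne'
    have h2 := hdenne k
    field_simp
  have hu : Tendsto (fun k => M ^ e k * a 0 ^ f k) atTop
      (nhds (M ^ (N / A) * a 0 ^ (q₀ / A))) :=
    (Tendsto.rpow tendsto_const_nhds helim (Or.inl hM.ne')).mul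
      (Tendsto.rpow tendsto_const_nhds hflim (Or.inl ha_zero.ne'))
  have h1 : limsup a atTop ≤ limsup (fun k => M ^ e k * a 0 ^ f k) atTop :=
    limsup_le_limsup (Eventually.of_forall hbound)
      (isCoboundedUnder_le_of_le atTop ha_nonneg) hu.isBoundedUnder_le
  rw [hu.limsup_eq] at h1
  exact h1
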